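/- Let J be an unbounded subinterval of ℝ and g : J → ℝ such that g′ exists and is locally absolutely continuous on J, with second derivative g″ ∈ L^∞(J). If g ∈ L^∞(J), then g′ ∈ L^∞(J) and ‖g′‖_{J,∞} ≤ 2√2·‖g‖_{J,∞}^{1/2}·‖g″‖_{J,∞}^{1/2}. -/

import Mathlib

open MeasureTheory Set

/-- Taylor-type estimate at the endpoints: if `g'` is `M2`-Lipschitz on `[u,v]`, then the
integral of `g'` differs from `(v-u) * g' u` (resp. `(v-u) * g' v`) by at most `M2 (v-u)^2/2`. -/
lemma landau_endpoint_taylor (g' : ℝ → ℝ) (u v M2 : ℝ) (huv : u ≤ v) (_hM2 : 0 ≤ M2)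
    (hcont : ContinuousOn g' (Icc u v))
    (hlip : ∀ t ∈ Icc u v, ∀ s ∈ Icc u v, |g' t - g' s| ≤ M2 * |t - s|) :
    |(∫ t in u..v, g' t) - (v - u) * g' u| ≤ M2 * (v - u) ^ 2 / 2 ∧
      |(∫ t in u..v, g' t) - (v - u) * g' v| ≤ M2 * (v - u) ^ 2 / 2 := by
  have hi : IntervalIntegrable g' volume u v :=
    (hcont.mono (by rw [uIcc_of_le huv])).intervalIntegrable
  have hid : ∀ c : ℝ, ∫ t in u..v, M2 * (t - c) = M2 * ((v ^ 2 - u ^ 2) / 2 - (v - u) * c) := by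
    intro c
    rw [intervalIntegral.integral_const_mul,
      intervalIntegral.integral_sub intervalIntegral.intervalIntegrable_id intervalIntegrable_const,
      integral_id, intervalIntegral.integral_const, smul_eq_mul]
  have hlin : ∀ c : ℝ, IntervalIntegrable (fun t => M2 * (t - c)) volume u v := fun c =>
    (continuous_const.mul (continuous_id.sub continuous_const)).intervalIntegrable u v
  have humem : u ∈ Icc u v := left_mem_Icc.2 huv
  have hvmem : v ∈ Icc u v := right_mem_Icc.2 huv
  constructor
  · have h1 : (∫ t in u..v, g' t) - (v - u) * g' u = ∫ t in u..v, (g' t - g' u) := by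
      rw [intervalIntegral.integral_sub hi intervalIntegrable_const,
        intervalIntegral.integral_const, smul_eq_mul]
    have hbd : ∀ t ∈ Icc u v, |g' t - g' u| ≤ M2 * (t - u) := by
      intro t ht
      have := hlip t ht u humem
      rwa [abs_of_nonneg (sub_nonneg.2 ht.1)] at this
    have hup : ∫ t in u..v, (g' t - g' u) ≤ ∫ t in u..v, M2 * (t - u) := by
      apply intervalIntegral.integral_mono_on huv (hi.sub intervalIntegrable_const) (hlin u)
      exact fun t ht => (le_abs_self _).trans (hbd t ht)
    have hlo : ∫ t in u..v, (-(M2 * (t - u))) ≤ ∫ t in u..v, (g' t - g' u) := by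
      apply intervalIntegral.integral_mono_on huv (hlin u).neg (hi.sub intervalIntegrable_const)
      exact fun t ht => (abs_le.1 (hbd t ht)).1
    rw [intervalIntegral.integral_neg, hid u] at hlo
    rw [hid u] at hup
    rw [h1, abs_le]
    constructor <;> nlinarith [hup, hlo]
  · have h1 : (∫ t in u..v, g' t) - (v - u) * g' v = ∫ t in u..v, (g' t - g' v) := by
      rw [intervalIntegral.integral_sub hi intervalIntegrable_const,
        intervalIntegral.integral_const, smul_eq_mul]
    have hbd : ∀ t ∈ Icc u v, |g' t - g' v| ≤ -(M2 * (t - v)) := by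
      intro t ht
      have := hlip t ht v hvmem
      rw [abs_of_nonpos (sub_nonpos.2 ht.2)] at this
      linarith [this]
    have hup : ∫ t in u..v, (g' t - g' v) ≤ ∫ t in u..v, (-(M2 * (t - v))) := by
      apply intervalIntegral.integral_mono_on huv (hi.sub intervalIntegrable_const) (hlin v).neg
      exact fun t ht => (le_abs_self _).trans (hbd t ht)
    have hlo : ∫ t in u..v, (M2 * (t - v)) ≤ ∫ t in u..v, (g' t - g' v) := by
      apply intervalIntegral.integral_mono_on huv (hlin v) (hi.sub intervalIntegrable_const)
      intro t ht
      have := (abs_le.1 (hbd t ht)).1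
      linarith [this]
    rw [intervalIntegral.integral_neg, hid v] at hup
    rw [hid v] at hlo
    rw [h1, abs_le]
    constructor <;> nlinarith [hup, hlo]

set_option maxHeartbeats 1600000 in
theorem landau_inf_inf
    (J : Set ℝ) (hJ : J.OrdConnected) (hJu : ¬ Bornology.IsBounded J)
    (g g' g'' : ℝ → ℝ)
    (hderiv : ∀ x ∈ J, HasDerivWithinAt g (g' x) J x)
    (hint : ∀ a ∈ J, ∀ b ∈ J, IntervalIntegrable g'' volume a b)
    (hftc : ∀ a ∈ J, ∀ b ∈ J, g' b - g' a = ∫ t in a..b, g'' t)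
    (hg'' : MemLp g'' ⊤ (volume.restrict J))
    (hg : MemLp g ⊤ (volume.restrict J)) :
    MemLp g' ⊤ (volume.restrict J) ∧
      (eLpNorm g' ⊤ (volume.restrict J)).toReal ≤
        2 * Real.sqrt 2 * (eLpNorm g ⊤ (volume.restrict J)).toReal ^ ((1 : ℝ) / 2) *
          (eLpNorm g'' ⊤ (volume.restrict J)).toReal ^ ((1 : ℝ) / 2) := by
  have hJm : MeasurableSet J := hJ.measurableSet
  set μ := volume.restrict J with hμ
  set M0 := (eLpNorm g ⊤ μ).toReal with hM0
  set M2 := (eLpNorm g'' ⊤ μ).toReal with hM2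
  have hM0nn : 0 ≤ M0 := ENNReal.toReal_nonneg
  have hM2nn : 0 ≤ M2 := ENNReal.toReal_nonneg
  -- a.e. bounds
  have hae_of_mem : ∀ (f : ℝ → ℝ), MemLp f ⊤ μ → ∀ᵐ x ∂μ, ‖f x‖ ≤ (eLpNorm f ⊤ μ).toReal := by
    intro f hf
    have h1 : ∀ᵐ y ∂μ, (‖f y‖₊ : ENNReal) ≤ eLpNormEssSup f μ := ae_le_eLpNormEssSup
    have hne : eLpNormEssSup f μ ≠ ⊤ := by
      rw [← eLpNorm_exponent_top]; exact hf.2.ne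
    filter_upwards [h1] with y hy
    have := ENNReal.toReal_mono hne hy
    rw [eLpNorm_exponent_top]
    simpa using this
  have haeg : ∀ᵐ x ∂μ, ‖g x‖ ≤ M0 := hae_of_mem g hg
  have haeg'' : ∀ᵐ x ∂μ, ‖g'' x‖ ≤ M2 := hae_of_mem g'' hg''
  have hae2 : ∀ᵐ x ∂volume, x ∈ J → ‖g'' x‖ ≤ M2 := (ae_restrict_iff' hJm).1 haeg''
  have haeg0 : ∀ᵐ x ∂volume, x ∈ J → ‖g x‖ ≤ M0 := (ae_restrict_iff' hJm).1 haeg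
  -- Lipschitz bound on g'
  have hlip : ∀ a ∈ J, ∀ b ∈ J, |g' b - g' a| ≤ M2 * |b - a| := by
    intro a ha b hb
    rw [hftc a ha b hb, ← Real.norm_eq_abs]
    apply intervalIntegral.norm_integral_le_of_norm_le_const_ae
    filter_upwards [hae2] with x hx hmem
    exact hx (hJ.uIcc_subset ha hb (uIoc_subset_uIcc hmem))
  -- continuity of g' on J
  have hcont' : ContinuousOn g' J := by
    apply LipschitzOnWith.continuousOn (K := M2.toNNReal)
    rw [lipschitzOnWith_iff_dist_le_mul]
    intro x hx y hy
    rw [Real.dist_eq, Real.dist_eq, Real.coe_toNNReal M2 hM2nn]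
    exact hlip y hy x hx
  -- FTC for g
  have hftcg : ∀ u ∈ J, ∀ v ∈ J, u ≤ v → ∫ t in u..v, g' t = g v - g u := by
    intro u hu v hv huv
    have hsub : Icc u v ⊆ J := hJ.out hu hv
    apply intervalIntegral.integral_eq_sub_of_hasDeriv_right_of_le huv
    · exact fun t ht => ((hderiv t (hsub ht)).continuousWithinAt).mono hsub
    · intro t ht
      have hJn : J ∈ nhds t := Filter.mem_of_superset
        (isOpen_Ioo.mem_nhds ht) ((Ioo_subset_Icc_self).trans hsub)
      exact ((hderiv t (hsub (Ioo_subset_Icc_self ht))).hasDerivAt hJn).hasDerivWithinAt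
    · exact ((hcont'.mono (by rw [uIcc_of_le huv]; exact hsub)).intervalIntegrable)
  -- combined estimate at endpoints
  have hAB : ∀ u ∈ J, ∀ v ∈ J, u ≤ v → ‖g u‖ ≤ M0 → ‖g v‖ ≤ M0 →
      |g' u| * (v - u) ≤ 2 * M0 + M2 * (v - u) ^ 2 / 2 ∧
        |g' v| * (v - u) ≤ 2 * M0 + M2 * (v - u) ^ 2 / 2 := by
    intro u hu v hv huv hgu hgv
    have hsub : Icc u v ⊆ J := hJ.out hu hv
    have htay := landau_endpoint_taylor g' u v M2 huv hM2nn (hcont'.mono hsub)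
      (fun t ht s hs => hlip s (hsub hs) t (hsub ht))
    rw [hftcg u hu v hv huv] at htay
    rw [Real.norm_eq_abs] at hgu hgv
    obtain ⟨h1, h2⟩ := htay
    have e1 := abs_le.1 h1
    have e2 := abs_le.1 h2
    have hgu' := abs_le.1 hgu
    have hgv' := abs_le.1 hgv
    constructor
    · rcases abs_cases (g' u) with ⟨heq, _⟩ | ⟨heq, _⟩ <;> rw [heq] <;> nlinarith
    · rcases abs_cases (g' v) with ⟨heq, _⟩ | ⟨heq, _⟩ <;> rw [heq] <;> nlinarith
  -- existence of a good point in any nondegenerate subinterval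
  have hexg : ∀ a b : ℝ, a < b → Icc a b ⊆ J → ∃ y ∈ Icc a b, ‖g y‖ ≤ M0 := by
    intro a b hab hsub
    have hne : volume.restrict (Icc a b) ≠ 0 := by
      simp only [ne_eq, Measure.restrict_eq_zero, Real.volume_Icc, ENNReal.ofReal_eq_zero,
        not_le]
      linarith
    have : (ae (volume.restrict (Icc a b))).NeBot := ae_neBot.2 hne
    have h1 : ∀ᵐ y ∂volume.restrict (Icc a b), y ∈ J → ‖g y‖ ≤ M0 := ae_restrict_of_ae haeg0
    have h2 := ae_restrict_mem (μ := volume) (measurableSet_Icc (a := a) (b := b))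
    exact ((h2.and h1).mono fun y hy => ⟨hy.1, hy.2 (hsub hy.1)⟩).exists
  -- reach: J contains an interval of length r adjacent to any of its points
  have hreach : ∀ x ∈ J, ∀ r : ℝ, 0 < r → Icc x (x + r) ⊆ J ∨ Icc (x - r) x ⊆ J := by
    intro x hx r hr
    rw [isBounded_iff_forall_norm_le] at hJu
    push_neg at hJu
    obtain ⟨y, hyJ, hy⟩ := hJu (|x| + r)
    rw [Real.norm_eq_abs] at hy
    rcases le_or_gt y x with hyx | hxy
    · right
      have hyr : y ≤ x - r := by
        rcases abs_cases y with ⟨h1, _⟩ | ⟨h1, _⟩ <;> [skip; skip] <;>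
          nlinarith [le_abs_self x, neg_abs_le x]
      exact fun t ht => hJ.out hyJ hx ⟨le_trans hyr ht.1, ht.2⟩
    · left
      have hyr : x + r ≤ y := by
        rcases abs_cases y with ⟨h1, _⟩ | ⟨h1, _⟩ <;> [skip; skip] <;>
          nlinarith [le_abs_self x, neg_abs_le x]
      exact fun t ht => hJ.out hx hyJ ⟨ht.1, le_trans ht.2 hyr⟩
  set C := 2 * Real.sqrt 2 * Real.sqrt M0 * Real.sqrt M2 with hC
  have hCnn : 0 ≤ C := by positivity
  have hs2 : (1:ℝ) ≤ Real.sqrt 2 := by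
    nlinarith [Real.sq_sqrt (by norm_num : (0:ℝ) ≤ 2), Real.sqrt_nonneg 2]
  have h22 : (Real.sqrt 2) ^ 2 = 2 := Real.sq_sqrt (by norm_num)
  -- a.e. pointwise bound on g'
  have haeC : ∀ᵐ x ∂μ, ‖g' x‖ ≤ C := by
    filter_upwards [ae_restrict_mem hJm, haeg] with x hxJ hgx
    rw [Real.norm_eq_abs]
    set A := |g' x| with hA
    have hAnn : 0 ≤ A := abs_nonneg _
    have hAh : ∀ h : ℝ, 0 < h → A * h ≤ 2 * M0 + M2 * h ^ 2 := by
      intro h hh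
      have hrpos : 0 < Real.sqrt 2 * h := by nlinarith
      rcases hreach x hxJ (Real.sqrt 2 * h) hrpos with hsub | hsub
      · have hIccsub : Icc (x + h) (x + Real.sqrt 2 * h) ⊆ J := fun t ht =>
          hsub ⟨by linarith [ht.1], ht.2⟩
        obtain ⟨y, hyIcc, hgy⟩ := hexg (x + h) (x + Real.sqrt 2 * h) (by nlinarith) hIccsub
        have hyJ : y ∈ J := hIccsub hyIcc
        have hxy : x ≤ y := by linarith [hyIcc.1]
        have hmain := (hAB x hxJ y hyJ hxy hgx hgy).1
        have hk1 : h ≤ y - x := by linarith [hyIcc.1]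
        have hk2 : y - x ≤ Real.sqrt 2 * h := by linarith [hyIcc.2]
        have p1 : A * h ≤ A * (y - x) := mul_le_mul_of_nonneg_left hk1 hAnn
        have p2 : (y - x) * (y - x) ≤ Real.sqrt 2 * h * (Real.sqrt 2 * h) :=
          mul_le_mul hk2 hk2 (by linarith) (le_of_lt hrpos)
        have p3 : M2 * (y - x) ^ 2 ≤ M2 * (2 * h ^ 2) :=
          mul_le_mul_of_nonneg_left (by nlinarith [h22]) hM2nn
        have hAe : A = |g' x| := hA
        rw [← hAe] at hmain
        linarith
      · have hIccsub : Icc (x - Real.sqrt 2 * h) (x - h) ⊆ J := fun t ht =>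
          hsub ⟨ht.1, by linarith [ht.2]⟩
        obtain ⟨y, hyIcc, hgy⟩ := hexg (x - Real.sqrt 2 * h) (x - h) (by nlinarith) hIccsub
        have hyJ : y ∈ J := hIccsub hyIcc
        have hyx : y ≤ x := by linarith [hyIcc.2]
        have hmain := (hAB y hyJ x hxJ hyx hgy hgx).2
        have hk1 : h ≤ x - y := by linarith [hyIcc.2]
        have hk2 : x - y ≤ Real.sqrt 2 * h := by linarith [hyIcc.1]
        have p1 : A * h ≤ A * (x - y) := mul_le_mul_of_nonneg_left hk1 hAnn
        have p2 : (x - y) * (x - y) ≤ Real.sqrt 2 * h * (Real.sqrt 2 * h) :=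
          mul_le_mul hk2 hk2 (by linarith) (le_of_lt hrpos)
        have p3 : M2 * (x - y) ^ 2 ≤ M2 * (2 * h ^ 2) :=
          mul_le_mul_of_nonneg_left (by nlinarith [h22]) hM2nn
        have hAe : A = |g' x| := hA
        rw [← hAe] at hmain
        linarith
    by_cases hA0 : A ≤ 0
    · linarith
    push_neg at hA0
    by_cases hM20 : M2 = 0
    · exfalso
      have hh : 0 < (2 * M0 + 1) / A := by positivity
      have hk := hAh _ hh
      rw [hM20] at hk
      have heq : A * ((2 * M0 + 1) / A) = 2 * M0 + 1 := by field_simp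
      rw [heq] at hk
      linarith
    have hM2pos : 0 < M2 := lt_of_le_of_ne hM2nn (Ne.symm hM20)
    have hh : 0 < A / (2 * M2) := by positivity
    have key := hAh _ hh
    have hA2 : A ^ 2 ≤ 8 * M0 * M2 := by
      have h1 : A * (A / (2 * M2)) = A ^ 2 / (2 * M2) := by ring
      have h2 : M2 * (A / (2 * M2)) ^ 2 = A ^ 2 / (4 * M2) := by
        field_simp
        ring
      rw [h1, h2] at key
      have h3 := mul_le_mul_of_nonneg_right key (by positivity : (0:ℝ) ≤ 4 * M2)
      have h4 : A ^ 2 / (2 * M2) * (4 * M2) = 2 * A ^ 2 := by field_simp; ring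
      have h5 : (2 * M0 + A ^ 2 / (4 * M2)) * (4 * M2) = 8 * M0 * M2 + A ^ 2 := by
        field_simp; ring
      rw [h4, h5] at h3
      linarith
    have hs0 := Real.sq_sqrt hM0nn
    have hs2' := Real.sq_sqrt hM2nn
    have hC2 : C ^ 2 = 8 * M0 * M2 := by
      have hexp : (2 * Real.sqrt 2 * Real.sqrt M0 * Real.sqrt M2) ^ 2 =
          4 * (Real.sqrt 2 ^ 2) * (Real.sqrt M0 ^ 2) * (Real.sqrt M2 ^ 2) := by ring
      rw [hC, hexp, h22, hs0, hs2']
      ring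
    have hfin := Real.sqrt_le_sqrt (hA2.trans_eq hC2.symm)
    rwa [Real.sqrt_sq hAnn, Real.sqrt_sq hCnn] at hfin
  have hmeas : AEStronglyMeasurable g' μ := hcont'.aestronglyMeasurable hJm
  refine ⟨memLp_top_of_bound hmeas C haeC, ?_⟩
  have h1 : eLpNorm g' ⊤ μ ≤ ENNReal.ofReal C := by
    rw [eLpNorm_exponent_top]
    exact eLpNormEssSup_le_of_ae_bound haeC
  have h2 : (eLpNorm g' ⊤ μ).toReal ≤ C := by
    have := ENNReal.toReal_mono ENNReal.ofReal_ne_top h1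
    rwa [ENNReal.toReal_ofReal hCnn] at this
  refine h2.trans (le_of_eq ?_)
  rw [hC, Real.sqrt_eq_rpow M0, Real.sqrt_eq_rpow M2]
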